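/- There do not exist five distinct vertices a, b, c, d, e ∈ V such that φ(bc) = φ(de), φ(ad) = φ(cd), and φ(ab) = φ(ac), where φ is the Modified CFLS coloring. -/
import Mathlib


namespace CFLS

/-- A vertex of `K_n` for `n = 2^(m^2)`: `m` blocks, each a string of `m` bits.
`x k` is the `k`-th block `x^(k+1)`, and `x k j` is its `j`-th bit (most significant first). -/
abbrev Vtx (m : ℕ) := Fin m → Fin m → Bool

/-- The `j`-th bit of a bit string (as a total function of `j : ℕ`). -/
def bitAt {N : ℕ} (f : Fin N → Bool) (j : ℕ) : Bool :=
  if h : j < N then f ⟨j, h⟩ else false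

/-- The value of a bit string read as a binary integer, most significant bit first. -/
def strToNat {N : ℕ} (f : Fin N → Bool) : ℕ :=
  ∑ j : Fin N, if f j then 2 ^ (N - 1 - j.val) else 0

/-- The `k`-th block of a vertex (as a total function of `k : ℕ`). -/
def blockAt {m : ℕ} (x : Vtx m) (k : ℕ) : Fin m → Bool :=
  if h : k < m then x ⟨k, h⟩ else fun _ => false

/-- The least block index at which `x` and `y` differ. -/
noncomputable def firstDiffBlock {m : ℕ} (x y : Vtx m) : ℕ :=
  sInf {k | blockAt x k ≠ blockAt y k}

/-- The position (1-indexed) of the first bit at which two bit strings differ; `0` if equal. -/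
noncomputable def firstDiffIdx {N : ℕ} (f g : Fin N → Bool) : ℕ :=
  if f = g then 0 else sInf {j | bitAt f j ≠ bitAt g j} + 1

/-- The value of a vertex read as a binary integer (concatenation of its blocks). -/
def vtxToNat {m : ℕ} (x : Vtx m) : ℕ :=
  ∑ k : Fin m, strToNat (x k) * (2 ^ m) ^ (m - 1 - k.val)

/-- The colors of the Modified CFLS coloring:
`((i, {x^(i), y^(i)}), i_1, …, i_m, δ_1, …, δ_m)`. -/
abbrev Color (m : ℕ) := (ℕ × Set (Fin m → Bool)) × (Fin m → ℕ) × (Fin m → ℤ)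

/-- The Modified CFLS color of the edge `xy` assuming `x ≤ y` as binary integers. -/
noncomputable def phiAux {m : ℕ} (x y : Vtx m) : Color m :=
  ((firstDiffBlock x y,
      {blockAt x (firstDiffBlock x y), blockAt y (firstDiffBlock x y)}),
   fun k => firstDiffIdx (x k) (y k),
   fun k => if strToNat (x k) ≤ strToNat (y k) then (1 : ℤ) else -1)

/-- The Modified CFLS coloring `φ`. -/
noncomputable def phi {m : ℕ} (x y : Vtx m) : Color m :=
  if vtxToNat x ≤ vtxToNat y then phiAux x y else phiAux y x

/-- The ten edges among five vertices. -/
def edgeList {m : ℕ} (a b c d e : Vtx m) : List (Vtx m × Vtx m) :=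
  [(a,b),(a,c),(a,d),(a,e),(b,c),(b,d),(b,e),(c,d),(c,e),(d,e)]

/-- The number of the ten edges among `a,b,c,d,e` receiving color `col` under `φ`. -/
noncomputable def colorCount {m : ℕ} (a b c d e : Vtx m) (col : Color m) : ℕ :=
  ((edgeList a b c d e).map fun p => phi p.1 p.2).countP fun x =>
    @decide (x = col) (Classical.propDecidable _)

/-- Five pairwise distinct vertices. -/
def Distinct5 {m : ℕ} (a b c d e : Vtx m) : Prop :=
  a ≠ b ∧ a ≠ c ∧ a ≠ d ∧ a ≠ e ∧ b ≠ c ∧ b ≠ d ∧ b ≠ e ∧ c ≠ d ∧ c ≠ e ∧ d ≠ e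

/-- `col` appears on some edge among `a,b,c,d,e`. -/
noncomputable def IsAttained {m : ℕ} (a b c d e : Vtx m) (col : Color m) : Prop :=
  colorCount a b c d e col ≠ 0

/-- A 2-2-2-2-2 configuration: five distinct vertices such that `φ` on the ten edges
among them takes exactly five values, each attained on exactly two edges. -/
def IsConfig22222 {m : ℕ} (a b c d e : Vtx m) : Prop :=
  Distinct5 a b c d e ∧
  ∀ col : Color m, colorCount a b c d e col = 0 ∨ colorCount a b c d e col = 2

/-- The color class of `col` is a matching: two vertex-disjoint edges of color `col`. -/
def IsMatchingClass {m : ℕ} (a b c d e : Vtx m) (col : Color m) : Prop :=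
  ∃ p ∈ edgeList a b c d e, ∃ q ∈ edgeList a b c d e,
    phi p.1 p.2 = col ∧ phi q.1 q.2 = col ∧
    p.1 ≠ q.1 ∧ p.1 ≠ q.2 ∧ p.2 ≠ q.1 ∧ p.2 ≠ q.2

/-- The color class of `col` is a path: two distinct edges of color `col` sharing a vertex. -/
def IsPathClass {m : ℕ} (a b c d e : Vtx m) (col : Color m) : Prop :=
  ∃ p ∈ edgeList a b c d e, ∃ q ∈ edgeList a b c d e,
    p ≠ q ∧ phi p.1 p.2 = col ∧ phi q.1 q.2 = col ∧
    (p.1 = q.1 ∨ p.1 = q.2 ∨ p.2 = q.1 ∨ p.2 = q.2)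



lemma firstDiffIdx_symm {N : ℕ} (f g : Fin N → Bool) :
    firstDiffIdx f g = firstDiffIdx g f := by
  unfold firstDiffIdx
  have h2 : {j | bitAt f j ≠ bitAt g j} = {j | bitAt g j ≠ bitAt f j} := by
    ext j; simp [ne_comm]
  by_cases h : f = g
  · rw [if_pos h, if_pos h.symm]
  · rw [if_neg h, if_neg (Ne.symm h), h2]

lemma firstDiffIdx_eq_zero {N : ℕ} {f g : Fin N → Bool} :
    firstDiffIdx f g = 0 ↔ f = g := by
  unfold firstDiffIdx
  split <;> simp_all

lemma bit_ne_nonempty {N : ℕ} {f g : Fin N → Bool} (h : f ≠ g) :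
    {j | bitAt f j ≠ bitAt g j}.Nonempty := by
  have : ∃ j : Fin N, f j ≠ g j := by
    by_contra hc
    push_neg at hc
    exact h (funext hc)
  obtain ⟨j, hj⟩ := this
  exact ⟨j.val, by simpa [bitAt, j.isLt] using hj⟩

/-- Key lemma: if `A` first differs from `X` and from `Y` at the same index and `X ≠ Y`,
then `X` and `Y` first differ strictly later. -/
lemma firstDiffIdx_lt {N : ℕ} {A X Y : Fin N → Bool} (hXY : X ≠ Y)
    (h : firstDiffIdx A X = firstDiffIdx A Y) :
    firstDiffIdx A X < firstDiffIdx X Y := by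
  by_cases hAX : A = X
  · subst hAX
    rw [firstDiffIdx_eq_zero.mpr rfl] at h
    exact absurd (firstDiffIdx_eq_zero.mp h.symm) hXY
  by_cases hAY : A = Y
  · subst hAY
    rw [firstDiffIdx_eq_zero.mpr rfl] at h
    exact absurd (firstDiffIdx_eq_zero.mp h) hAX
  have hX := bit_ne_nonempty hAX
  have hY := bit_ne_nonempty hAY
  have hXYn := bit_ne_nonempty hXY
  unfold firstDiffIdx at h ⊢
  rw [if_neg hAX, if_neg hAY] at h
  rw [if_neg hAX, if_neg hXY]
  have hsEq : sInf {j | bitAt A j ≠ bitAt X j} = sInf {j | bitAt A j ≠ bitAt Y j} := by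
    omega
  obtain ⟨sX, hsXdef⟩ : ∃ s, sInf {j | bitAt A j ≠ bitAt X j} = s := ⟨_, rfl⟩
  have hsX : bitAt A sX ≠ bitAt X sX := hsXdef ▸ Nat.sInf_mem hX
  have hsY : bitAt A sX ≠ bitAt Y sX := by
    have := Nat.sInf_mem hY
    rw [← hsEq, hsXdef] at this; exact this
  have key : ∀ j, j ≤ sX → bitAt X j = bitAt Y j := by
    intro j hj
    rcases Nat.lt_or_ge j sX with hlt | hge
    · have h1 : ¬ bitAt A j ≠ bitAt X j :=
        Nat.notMem_of_lt_sInf (show j < sInf {j | bitAt A j ≠ bitAt X j} by omega)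
      have h2 : ¬ bitAt A j ≠ bitAt Y j :=
        Nat.notMem_of_lt_sInf (show j < sInf {j | bitAt A j ≠ bitAt Y j} by omega)
      push_neg at h1 h2
      rw [← h1, h2]
    · have hj' : j = sX := le_antisymm hj hge
      subst hj'
      revert hsX hsY
      cases bitAt A j <;> cases bitAt X j <;> cases bitAt Y j <;> simp
  have hle : sX + 1 ≤ sInf {j | bitAt X j ≠ bitAt Y j} := by
    by_contra hc
    push_neg at hc
    exact (Nat.sInf_mem hXYn) (key _ (by omega))
  omega

lemma firstDiffBlock_symm {m : ℕ} (x y : Vtx m) :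
    firstDiffBlock x y = firstDiffBlock y x := by
  unfold firstDiffBlock
  congr 1
  ext k; simp [ne_comm]

lemma phi_fst {m : ℕ} (x y : Vtx m) :
    (phi x y).1 = (firstDiffBlock x y,
      {blockAt x (firstDiffBlock x y), blockAt y (firstDiffBlock x y)}) := by
  unfold phi phiAux
  split
  · rfl
  · simp [firstDiffBlock_symm y x, Set.pair_comm]

lemma phi_idx {m : ℕ} (x y : Vtx m) (k : Fin m) :
    (phi x y).2.1 k = firstDiffIdx (x k) (y k) := by
  unfold phi phiAux
  split
  · rfl
  · exact firstDiffIdx_symm (y k) (x k)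

lemma block_ne_nonempty {m : ℕ} {x y : Vtx m} (h : x ≠ y) :
    {k | blockAt x k ≠ blockAt y k}.Nonempty := by
  have : ∃ k : Fin m, x k ≠ y k := by
    by_contra hc
    push_neg at hc
    exact h (funext hc)
  obtain ⟨k, hk⟩ := this
  exact ⟨k.val, by simpa [blockAt, k.isLt] using hk⟩

/-- The configuration of Figure (D) is forbidden under the Modified CFLS coloring. -/
theorem no_last_forbidden (m : ℕ) (hm : 0 < m) :
    ¬ ∃ a b c d e : Vtx m, Distinct5 a b c d e ∧
      phi b c = phi d e ∧ phi a d = phi c d ∧ phi a b = phi a c := by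
  rintro ⟨a, b, c, d, e, hd, h3, h2, h1⟩
  have hbc : b ≠ c := hd.2.2.2.2.1
  have hde : d ≠ e := hd.2.2.2.2.2.2.2.2.2
  set i := firstDiffBlock b c with hi
  have hmemBC : blockAt b i ≠ blockAt c i := Nat.sInf_mem (block_ne_nonempty hbc)
  -- first components of color 3
  have h3' := congrArg Prod.fst h3
  rw [phi_fst, phi_fst] at h3'
  have hblk : firstDiffBlock d e = i := (Prod.mk.injEq _ _ _ _ ▸ h3').1.symm
  have hset : ({blockAt b i, blockAt c i} : Set (Fin m → Bool)) =
      {blockAt d i, blockAt e i} := by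
    have := (Prod.mk.injEq _ _ _ _ ▸ h3').2
    rwa [hblk] at this
  have hmemDE : blockAt d i ≠ blockAt e i := by
    have := Nat.sInf_mem (block_ne_nonempty hde)
    rwa [← firstDiffBlock, hblk] at this
  -- i < m
  have him : i < m := by
    by_contra hc
    apply hmemBC
    unfold blockAt
    rw [dif_neg hc, dif_neg hc]
  set K : Fin m := ⟨i, him⟩ with hK
  have hb : blockAt b i = b K := dif_pos him
  have hc : blockAt c i = c K := dif_pos him
  have hdK : blockAt d i = d K := dif_pos him
  have heK : blockAt e i = e K := dif_pos him
  rw [hb, hc] at hmemBC hset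
  rw [hdK, heK] at hmemDE hset
  -- index components of colors 1 and 2 at K
  have hq : firstDiffIdx (a K) (b K) = firstDiffIdx (a K) (c K) := by
    have := congrArg (fun col => col.2.1 K) h1
    simpa [phi_idx] using this
  have hr : firstDiffIdx (a K) (d K) = firstDiffIdx (c K) (d K) := by
    have := congrArg (fun col => col.2.1 K) h2
    simpa [phi_idx] using this
  have hDmem : d K ∈ ({b K, c K} : Set (Fin m → Bool)) := by
    rw [hset]; left; rfl
  rcases hDmem with hD | hD
  · -- d K = b K
    rw [hD, firstDiffIdx_symm (c K) (b K)] at hr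
    have hlt := firstDiffIdx_lt hmemBC hq
    rw [hr] at hlt
    exact absurd hlt (lt_irrefl _)
  · -- d K = c K
    rw [hD, firstDiffIdx_eq_zero.mpr rfl] at hr
    have hAc : a K = c K := firstDiffIdx_eq_zero.mp hr
    have habK : a K = b K :=
      firstDiffIdx_eq_zero.mp (hq.trans (firstDiffIdx_eq_zero.mpr hAc))
    exact hmemBC (habK.symm.trans hAc)

end CFLS
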